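/- Let L be a finite relational language and K a class of finite L-structures (with universes subsets of κ) closed under isomorphism and substructure and satisfying the amalgamation property and joint embedding property. Then the poset P_{κ,K}, whose conditions are members of K with universe a finite subset of κ, ordered by p ≤ q iff the universe of q is contained in that of p and q is the induced substructure of p on its universe, has the Knaster property (every uncountable set of conditions has an uncountable pairwise-compatible subset), provided κ ≥ ℵ₁. -/

import Mathlib

/-- A finite `L`-structure with universe a finite subset of `κ`, where the
relational language `L` is given by a type of relation symbols with arities `ar`. -/
structure FinStruct (L : Type*) (ar : L → ℕ) (κ : Type*) where
  A : Finset κ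
  rel : ∀ R : L, (Fin (ar R) → κ) → Prop
  supp : ∀ R t, rel R t → ∀ i, t i ∈ A

namespace FinStruct

variable {L : Type*} {ar : L → ℕ} {κ : Type*}

/-- `p` extends `q` : the universe grows and `q` is the induced substructure. -/
def Ext (p q : FinStruct L ar κ) : Prop :=
  q.A ⊆ p.A ∧ ∀ R t, (∀ i, t i ∈ q.A) → (q.rel R t ↔ p.rel R t)

/-- The induced substructure of `p` on `B`. -/
def restrict (p : FinStruct L ar κ) (B : Finset κ) [DecidableEq κ] :
    FinStruct L ar κ where
  A := p.A ∩ B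
  rel R t := p.rel R t ∧ ∀ i, t i ∈ B
  supp := fun R t h i => Finset.mem_inter.2 ⟨p.supp R t h.1 i, h.2 i⟩

/-- An embedding of `p` into `q` : an injection on the universe preserving and
reflecting all relations. -/
def Emb (p q : FinStruct L ar κ) : Prop :=
  ∃ f : κ → κ, Set.InjOn f p.A ∧ (∀ x ∈ p.A, f x ∈ q.A) ∧
    ∀ R t, (∀ i, t i ∈ p.A) → (p.rel R t ↔ q.rel R (f ∘ t))

/-- An isomorphism of `p` with `q` : an embedding which is onto the universe of `q`. -/
def Iso (p q : FinStruct L ar κ) : Prop :=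
  ∃ f : κ → κ, Set.InjOn f p.A ∧ (∀ x ∈ p.A, f x ∈ q.A) ∧
    (∀ y ∈ q.A, ∃ x ∈ p.A, f x = y) ∧
    ∀ R t, (∀ i, t i ∈ p.A) → (p.rel R t ↔ q.rel R (f ∘ t))

/-- A filter on the poset `P_{κ,K}` (conditions the members of `K`). -/
def IsPFilter (K G : Set (FinStruct L ar κ)) : Prop :=
  G.Nonempty ∧ G ⊆ K ∧ (∀ p ∈ G, ∀ q ∈ K, p.Ext q → q ∈ G) ∧
    (∀ p ∈ G, ∀ q ∈ G, ∃ s ∈ G, s.Ext p ∧ s.Ext q)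

/-- The generic interpretation of the relation symbols. -/
def genRel (G : Set (FinStruct L ar κ)) (R : L) (t : Fin (ar R) → κ) : Prop :=
  ∃ p ∈ G, p.rel R t

end FinStruct

open FinStruct

/-- Pigeonhole: an uncountable set has an uncountable fiber under any map to a
countable type. -/
theorem uncountable_fiber' {α β : Type*} [Countable β] (T : Set α)
    (hT : ¬ T.Countable) (f : α → β) : ∃ b, ¬ {a ∈ T | f a = b}.Countable := by
  by_contra h
  push_neg at h
  apply hT
  refine (Set.countable_iUnion h).mono ?_
  intro a ha
  rw [Set.mem_iUnion]
  exact ⟨f a, ha, rfl⟩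

/-- Δ-system lemma, bounded-cardinality version. -/
theorem delta_aux {α : Type*} [DecidableEq α] (n : ℕ) :
    ∀ D : Set (Finset α), ¬ D.Countable → (∀ A ∈ D, A.card ≤ n) →
    ∃ r : Finset α, ∃ D' ⊆ D, ¬ D'.Countable ∧
      ∀ A ∈ D', ∀ B ∈ D', A ≠ B → A ∩ B = r := by
  induction n with
  | zero =>
    intro D hD hcard
    exact absurd ((Set.countable_singleton (∅ : Finset α)).mono
      (fun A hA => by
        simpa using Finset.card_eq_zero.1 (Nat.le_zero.1 (hcard A hA)))) hD
  | succ n ih =>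
    intro D hD hcard
    by_cases hx : ∃ x, ¬ {A ∈ D | x ∈ A}.Countable
    · obtain ⟨x, hx⟩ := hx
      have hinj : Set.InjOn (fun A => A.erase x) {A ∈ D | x ∈ A} := by
        intro A hA B hB h
        have := congrArg (insert x) h
        rwa [Finset.insert_erase hA.2, Finset.insert_erase hB.2] at this
      have hDxu : ¬ ((fun A => A.erase x) '' {A ∈ D | x ∈ A}).Countable :=
        fun h => hx (Set.countable_of_injective_of_countable_image hinj h)
      have hDxcard : ∀ A ∈ (fun A => A.erase x) '' {A ∈ D | x ∈ A}, A.card ≤ n := by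
        rintro _ ⟨A, hA, rfl⟩
        show (A.erase x).card ≤ n
        have h1 := Finset.card_erase_of_mem hA.2
        have h2 := hcard A hA.1
        have h3 : 1 ≤ A.card := Finset.card_pos.2 ⟨x, hA.2⟩
        omega
      obtain ⟨r', E', hE'sub, hE'u, hE'⟩ := ih _ hDxu hDxcard
      refine ⟨insert x r', {A ∈ D | x ∈ A ∧ A.erase x ∈ E'},
        fun A hA => hA.1, ?_, ?_⟩
      · intro h
        apply hE'u
        refine (h.image (fun A => A.erase x)).mono ?_
        intro B hB
        obtain ⟨A, hA, rfl⟩ := hE'sub hB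
        exact ⟨A, ⟨hA.1, hA.2, hB⟩, rfl⟩
      · intro A hA B hB hne
        have h1 : A.erase x ≠ B.erase x :=
          fun h => hne (hinj ⟨hA.1, hA.2.1⟩ ⟨hB.1, hB.2.1⟩ h)
        have h2 := hE' _ hA.2.2 _ hB.2.2 h1
        ext a
        simp only [Finset.mem_inter, Finset.mem_insert]
        constructor
        · rintro ⟨haA, haB⟩
          by_cases hax : a = x
          · exact Or.inl hax
          · right
            rw [← h2]
            exact Finset.mem_inter.2 ⟨Finset.mem_erase.2 ⟨hax, haA⟩,
              Finset.mem_erase.2 ⟨hax, haB⟩⟩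
        · rintro (rfl | har)
          · exact ⟨hA.2.1, hB.2.1⟩
          · rw [← h2] at har
            have := Finset.mem_inter.1 har
            exact ⟨Finset.mem_of_mem_erase this.1, Finset.mem_of_mem_erase this.2⟩
    · push_neg at hx
      have hchaincond : ∀ c ⊆ {M : Set (Finset α) | M ⊆ D ∧
            M.Pairwise fun A B => A ∩ B = ∅}, IsChain (· ⊆ ·) c →
          ∃ ub ∈ {M : Set (Finset α) | M ⊆ D ∧ M.Pairwise fun A B => A ∩ B = ∅},
            ∀ s ∈ c, s ⊆ ub := by
        intro c hc hchain
        refine ⟨⋃₀ c, ⟨?_, ?_⟩, fun s hs => Set.subset_sUnion_of_mem hs⟩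
        · exact Set.sUnion_subset fun s hs => (hc hs).1
        · intro A hA B hB hne
          obtain ⟨s, hs, hAs⟩ := hA
          obtain ⟨t, ht, hBt⟩ := hB
          rcases hchain.total hs ht with hst | hts
          · exact (hc ht).2 (hst hAs) hBt hne
          · exact (hc hs).2 hAs (hts hBt) hne
      obtain ⟨M, hM⟩ := zorn_subset
          {M : Set (Finset α) | M ⊆ D ∧ M.Pairwise fun A B => A ∩ B = ∅} hchaincond
      refine ⟨∅, M, hM.1.1, ?_, fun A hA B hB hne => hM.1.2 hA hB hne⟩
      intro hMc
      apply hD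
      have hX : (⋃ A ∈ M, (A : Set α)).Countable :=
        hMc.biUnion fun A _ => A.countable_toSet
      have hcov : D ⊆ M ∪ ⋃ y ∈ ⋃ A ∈ M, (A : Set α), {A ∈ D | y ∈ A} := by
        intro A hA
        by_cases hAM : A ∈ M
        · exact Or.inl hAM
        · have hmeet : ∃ B ∈ M, (A ∩ B).Nonempty := by
            by_contra hmeet
            push_neg at hmeet
            have hmem : insert A M ∈
                {M : Set (Finset α) | M ⊆ D ∧ M.Pairwise fun A B => A ∩ B = ∅} := by
              constructor
              · exact Set.insert_subset hA hM.1.1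
              · intro C hC C' hC' hne
                rcases hC with rfl | hC
                · rcases hC' with rfl | hC'
                  · exact absurd rfl hne
                  · exact hmeet C' hC'
                · rcases hC' with rfl | hC'
                  · rw [Finset.inter_comm]
                    exact hmeet C hC
                  · exact hM.1.2 hC hC' hne
            exact hAM (hM.2 hmem (Set.subset_insert _ _) (Set.mem_insert _ _))
          obtain ⟨B, hB, y, hy⟩ := hmeet
          have hy' := Finset.mem_inter.1 hy
          exact Or.inr (Set.mem_biUnion
            (Set.mem_biUnion hB (hy'.2 : y ∈ (B : Set α))) ⟨hA, hy'.1⟩)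
      exact ((hMc.union (hX.biUnion fun y _ => hx y)).mono hcov)

/-- Δ-system lemma for uncountable families of finite sets. -/
theorem exists_delta {α : Type*} [DecidableEq α] (D : Set (Finset α))
    (hD : ¬ D.Countable) :
    ∃ r : Finset α, ∃ D' ⊆ D, ¬ D'.Countable ∧
      ∀ A ∈ D', ∀ B ∈ D', A ≠ B → A ∩ B = r := by
  obtain ⟨n, hn⟩ := uncountable_fiber' D hD Finset.card
  obtain ⟨r, D', hsub, hu, hp⟩ := delta_aux n _ hn (fun A hA => le_of_eq hA.2)
  exact ⟨r, D', fun A hA => (hsub hA).1, hu, hp⟩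

theorem FinStruct.ext' {L : Type*} {ar : L → ℕ} {κ : Type*}
    {p q : FinStruct L ar κ} (hA : p.A = q.A)
    (hr : ∀ R t, p.rel R t ↔ q.rel R t) : p = q := by
  obtain ⟨A, rel, supp⟩ := p
  obtain ⟨A', rel', supp'⟩ := q
  simp only at hA hr
  subst hA
  have : rel = rel' := funext fun R => funext fun t => propext (hr R t)
  subst this
  rfl

theorem FinStruct.ext_refl {L : Type*} {ar : L → ℕ} {κ : Type*}
    (p : FinStruct L ar κ) : p.Ext p :=
  ⟨subset_rfl, fun _ _ _ => Iff.rfl⟩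

theorem fiber_countable {L : Type*} [Finite L] {ar : L → ℕ} {κ : Type*}
    (S : Set (FinStruct L ar κ)) (A : Finset κ) :
    {p ∈ S | p.A = A}.Countable := by
  rw [← Set.countable_coe_iff]
  have hfin : Finite (∀ R : L, (Fin (ar R) → {x // x ∈ A}) → Prop) := inferInstance
  have : Finite ↥{p ∈ S | p.A = A} := by
    apply Finite.of_injective
      (fun (p : ↥{p ∈ S | p.A = A}) (R : L) (t : Fin (ar R) → {x // x ∈ A}) =>
        p.1.rel R (fun i => (t i : κ)))
    intro p q h
    apply Subtype.ext
    apply FinStruct.ext' (p.2.2.trans q.2.2.symm)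
    intro R t
    by_cases ht : ∀ i, t i ∈ A
    · exact iff_of_eq (congrFun (congrFun h R) (fun i => ⟨t i, ht i⟩))
    · push_neg at ht
      obtain ⟨i, hi⟩ := ht
      constructor
      · intro hrel
        exact absurd (p.2.2 ▸ p.1.supp R t hrel i) hi
      · intro hrel
        exact absurd (q.2.2 ▸ (q : FinStruct L ar κ).supp R t hrel i) hi
  exact Finite.to_countable

/-- Let `L` be a finite relational language, `κ ≥ ℵ₁`, and `K` a Fraïssé class of
finite `L`-structures with universes finite subsets of `κ` (closed under isomorphism
and substructure, with JEP and the amalgamation property -- in the strong form over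
intersections arising from the Δ-system argument). Then the poset `P_{κ,K}` is
Knaster: every uncountable set of conditions has an uncountable pairwise compatible
subset. -/
theorem knaster_finStruct {L : Type*} [Finite L] (ar : L → ℕ)
    {κ : Type*} [DecidableEq κ] [Uncountable κ]
    (K : Set (FinStruct L ar κ))
    (hIso : ∀ p ∈ K, ∀ q : FinStruct L ar κ, Iso p q → q ∈ K)
    (hSub : ∀ p ∈ K, ∀ B : Finset κ, p.restrict B ∈ K)
    (hJEP : ∀ p ∈ K, ∀ q ∈ K, ∃ s ∈ K, Emb p s ∧ Emb q s)
    (hAP : ∀ p ∈ K, ∀ q ∈ K, p.restrict q.A = q.restrict p.A →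
      ∃ s ∈ K, s.Ext p ∧ s.Ext q)
    (S : Set (FinStruct L ar κ)) (hSK : S ⊆ K) (hS : ¬ S.Countable) :
    ∃ T ⊆ S, ¬ T.Countable ∧
      ∀ p ∈ T, ∀ q ∈ T, ∃ s ∈ K, s.Ext p ∧ s.Ext q := by
  classical
  have hDu : ¬ (FinStruct.A '' S).Countable := by
    intro h
    apply hS
    refine (h.biUnion fun A _ => fiber_countable S A).mono ?_
    intro p hp
    exact Set.mem_biUnion ⟨p, hp, rfl⟩ ⟨hp, rfl⟩
  obtain ⟨r, D', hD'sub, hD'u, hroot⟩ := exists_delta _ hDu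
  have hrep : ∀ A : Finset κ, ∃ p : FinStruct L ar κ, A ∈ D' → p ∈ S ∧ p.A = A := by
    intro A
    by_cases hA : A ∈ D'
    · obtain ⟨p, hp⟩ := hD'sub hA
      exact ⟨p, fun _ => hp⟩
    · exact ⟨⟨∅, fun _ _ => False, by simp⟩, fun h => absurd h hA⟩
  choose g hg using hrep
  have hg1 : ∀ A ∈ D', g A ∈ S := fun A hA => (hg A hA).1
  have hg2 : ∀ A ∈ D', (g A).A = A := fun A hA => (hg A hA).2
  set T₀ : Set (FinStruct L ar κ) := g '' D' with hT₀
  have hT₀S : T₀ ⊆ S := by rintro _ ⟨A, hA, rfl⟩; exact hg1 A hA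
  have hT₀A : ∀ p ∈ T₀, p.A ∈ D' := by
    rintro _ ⟨A, hA, rfl⟩; rw [hg2 A hA]; exact hA
  have hT₀inj : ∀ p ∈ T₀, ∀ q ∈ T₀, p.A = q.A → p = q := by
    rintro _ ⟨A, hA, rfl⟩ _ ⟨B, hB, rfl⟩ h
    rw [hg2 A hA, hg2 B hB] at h
    rw [h]
  have hT₀u : ¬ T₀.Countable := by
    intro h
    apply hD'u
    refine (h.image FinStruct.A).mono ?_
    intro A hA
    exact ⟨g A, ⟨A, hA, rfl⟩, hg2 A hA⟩
  set f : FinStruct L ar κ → ∀ R : L, (Fin (ar R) → {x // x ∈ r}) → Prop :=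
    fun p R t => p.rel R (fun i => (t i : κ)) with hf
  obtain ⟨c, hTu⟩ := uncountable_fiber' T₀ hT₀u f
  refine ⟨{p ∈ T₀ | f p = c}, fun p hp => hT₀S hp.1, hTu, ?_⟩
  intro p hp q hq
  by_cases hpq : p = q
  · subst hpq
    exact ⟨p, hSK (hT₀S hp.1), p.ext_refl, p.ext_refl⟩
  · have hAne : p.A ≠ q.A := fun h => hpq (hT₀inj p hp.1 q hq.1 h)
    have hPQ : p.A ∩ q.A = r := hroot _ (hT₀A p hp.1) _ (hT₀A q hq.1) hAne
    have key : ∀ R t, (∀ i, t i ∈ r) → (p.rel R t ↔ q.rel R t) := by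
      intro R t ht
      exact iff_of_eq (congrFun (congrFun (hp.2.trans hq.2.symm) R)
        (fun i => (⟨t i, ht i⟩ : {x // x ∈ r})))
    apply hAP p (hSK (hT₀S hp.1)) q (hSK (hT₀S hq.1))
    apply FinStruct.ext' (Finset.inter_comm _ _)
    intro R t
    show (p.rel R t ∧ ∀ i, t i ∈ q.A) ↔ (q.rel R t ∧ ∀ i, t i ∈ p.A)
    constructor
    · rintro ⟨h1, h2⟩
      have hin : ∀ i, t i ∈ r := fun i =>
        hPQ ▸ Finset.mem_inter.2 ⟨p.supp R t h1 i, h2 i⟩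
      refine ⟨(key R t hin).1 h1, fun i => ?_⟩
      have hi := hin i
      rw [← hPQ] at hi
      exact (Finset.mem_inter.1 hi).1
    · rintro ⟨h1, h2⟩
      have hin : ∀ i, t i ∈ r := fun i =>
        hPQ ▸ Finset.mem_inter.2 ⟨h2 i, q.supp R t h1 i⟩
      refine ⟨(key R t hin).2 h1, fun i => ?_⟩
      have hi := hin i
      rw [← hPQ] at hi
      exact (Finset.mem_inter.1 hi).2
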